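/- Let f : {0,1}^n → {0,1} and suppose {S_1,...,S_k} is an NAADT basis for f. Then the Möbius sparsity of f is at most 2^k, and the Möbius pattern complexity of f is at most 2^k. -/
import Mathlib


/-- `AND_S(x) = ∏_{i ∈ S} x_i` as a real number. -/
def andR {n : ℕ} (S : Finset (Fin n)) (x : Fin n → Bool) : ℝ :=
  ∏ i ∈ S, (if x i then (1 : ℝ) else 0)

/-- `AND_S(x)` as a Boolean. -/
def andB {n : ℕ} (S : Finset (Fin n)) (x : Fin n → Bool) : Bool :=
  decide (∀ i ∈ S, x i = true)

/-- characteristic vector -/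
def chi {n : ℕ} (T : Finset (Fin n)) : Fin n → Bool := fun i => decide (i ∈ T)

lemma andR_chi {n : ℕ} (S T : Finset (Fin n)) :
    andR S (chi T) = if S ⊆ T then 1 else 0 := by
  unfold andR chi
  by_cases h : S ⊆ T
  · rw [if_pos h, Finset.prod_eq_one]
    intro i hi
    simp [h hi]
  · rw [if_neg h]
    obtain ⟨i, hiS, hiT⟩ := Finset.not_subset.1 h
    exact Finset.prod_eq_zero hiS (by simp [hiT])

lemma pow_card_sum_real {α : Type*} [DecidableEq α] (x : Finset α) :
    (∑ m ∈ x.powerset, (-1 : ℝ) ^ m.card) = if x = ∅ then 1 else 0 := by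
  have h := Finset.sum_powerset_neg_one_pow_card (x := x)
  calc (∑ m ∈ x.powerset, (-1 : ℝ) ^ m.card)
      = ((∑ m ∈ x.powerset, (-1 : ℤ) ^ m.card : ℤ) : ℝ) := by push_cast; rfl
    _ = _ := by rw [h]; split <;> simp

lemma interval_sum {n : ℕ} (S R : Finset (Fin n)) (hRS : R ⊆ S) :
    (∑ T ∈ S.powerset.filter (fun T => R ⊆ T), (-1 : ℝ) ^ (S \ T).card)
      = if R = S then 1 else 0 := by
  have key : (∑ T ∈ S.powerset.filter (fun T => R ⊆ T), (-1 : ℝ) ^ (S \ T).card)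
      = ∑ m ∈ (S \ R).powerset, (-1 : ℝ) ^ m.card := by
    refine Finset.sum_nbij' (fun T => S \ T) (fun U => S \ U) ?_ ?_ ?_ ?_ ?_
    · intro T hT
      simp only [Finset.mem_filter, Finset.mem_powerset] at hT
      exact Finset.mem_powerset.2 (Finset.sdiff_subset_sdiff le_rfl hT.2)
    · intro U hU
      simp only [Finset.mem_powerset] at hU
      simp only [Finset.mem_filter, Finset.mem_powerset]
      refine ⟨Finset.sdiff_subset, ?_⟩
      intro i hi
      simp only [Finset.mem_sdiff]
      have := hU
      constructor
      · exact hRS hi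
      · intro hiU
        have := Finset.mem_sdiff.1 (hU hiU)
        exact this.2 hi
    · intro T hT
      simp only [Finset.mem_filter, Finset.mem_powerset] at hT
      exact Finset.sdiff_sdiff_eq_self hT.1
    · intro U hU
      exact Finset.sdiff_sdiff_eq_self (Finset.mem_powerset.1 hU |>.trans Finset.sdiff_subset)
    · intro T hT
      rfl
  rw [key, pow_card_sum_real]
  by_cases h : R = S
  · simp [h]
  · rw [if_neg h, if_neg]
    rw [Finset.sdiff_eq_empty_iff_subset]
    intro hSR
    exact h (Finset.Subset.antisymm hRS hSR)

lemma inversion {n : ℕ} (f : (Fin n → Bool) → Bool) (c : Finset (Fin n) → ℝ)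
    (hf : ∀ x, (if f x then (1 : ℝ) else 0) = ∑ S : Finset (Fin n), c S * andR S x)
    (S : Finset (Fin n)) :
    (∑ T ∈ S.powerset, (-1 : ℝ) ^ (S \ T).card * (if f (chi T) then 1 else 0)) = c S := by
  have step1 : ∀ T : Finset (Fin n),
      (if f (chi T) then (1:ℝ) else 0) = ∑ R : Finset (Fin n), if R ⊆ T then c R else 0 := by
    intro T
    rw [hf (chi T)]
    refine Finset.sum_congr rfl fun R _ => ?_
    rw [andR_chi]
    split <;> simp
  calc (∑ T ∈ S.powerset, (-1 : ℝ) ^ (S \ T).card * (if f (chi T) then 1 else 0))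
      = ∑ T ∈ S.powerset, ∑ R : Finset (Fin n),
          (if R ⊆ T then (-1 : ℝ) ^ (S \ T).card * c R else 0) := by
        refine Finset.sum_congr rfl fun T _ => ?_
        rw [step1 T, Finset.mul_sum]
        refine Finset.sum_congr rfl fun R _ => ?_
        split <;> simp
    _ = ∑ R : Finset (Fin n), ∑ T ∈ S.powerset,
          (if R ⊆ T then (-1 : ℝ) ^ (S \ T).card * c R else 0) := Finset.sum_comm
    _ = ∑ R : Finset (Fin n), (if R = S then 1 else 0) * c R := by
        refine Finset.sum_congr rfl fun R _ => ?_
        rw [← Finset.sum_filter]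
        by_cases hRS : R ⊆ S
        · rw [← Finset.sum_mul, interval_sum S R hRS]
        · have hemp : S.powerset.filter (fun T => R ⊆ T) = ∅ := by
            rw [Finset.filter_eq_empty_iff]
            intro T hT hRT
            exact hRS (hRT.trans (Finset.mem_powerset.1 hT))
          rw [hemp, if_neg (by rintro rfl; exact hRS le_rfl)]
          simp
    _ = c S := by simp

/-- closure of `S` w.r.t. the basis: union of basis sets contained in `S`. -/
def clo {n : ℕ} (𝒮 : Finset (Finset (Fin n))) (S : Finset (Fin n)) : Finset (Fin n) :=
  (𝒮.filter fun B => B ⊆ S).sup id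

lemma clo_subset {n : ℕ} (𝒮 : Finset (Finset (Fin n))) (S : Finset (Fin n)) :
    clo 𝒮 S ⊆ S := by
  show clo 𝒮 S ≤ S
  apply Finset.sup_le
  intro B hB
  exact (Finset.mem_filter.1 hB).2

lemma subset_clo {n : ℕ} {𝒮 : Finset (Finset (Fin n))} {S B : Finset (Fin n)}
    (hB : B ∈ 𝒮) (hBS : B ⊆ S) : B ⊆ clo 𝒮 S := by
  show B ≤ clo 𝒮 S
  exact Finset.le_sup (f := id) (b := B) (Finset.mem_filter.2 ⟨hB, hBS⟩)

lemma andB_chi {n : ℕ} (B T : Finset (Fin n)) :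
    andB B (chi T) = decide (B ⊆ T) := by
  simp [andB, chi, Finset.subset_iff]

lemma vanish {n : ℕ} (f : (Fin n → Bool) → Bool)
    (𝒮 : Finset (Finset (Fin n)))
    (hbasis : ∀ x y : Fin n → Bool, (∀ S ∈ 𝒮, andB S x = andB S y) → f x = f y)
    (S : Finset (Fin n)) (i : Fin n) (hiS : i ∈ S) (hic : i ∉ clo 𝒮 S) :
    (∑ T ∈ S.powerset, (-1 : ℝ) ^ (S \ T).card * (if f (chi T) then 1 else 0)) = 0 := by
  classical
  set g : Finset (Fin n) → Finset (Fin n) :=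
    fun T => if i ∈ T then T.erase i else insert i T with hg
  have hgsub : ∀ T, T ⊆ S → g T ⊆ S := by
    intro T hT
    by_cases h : i ∈ T <;> simp only [hg, h, if_true, if_false]
    · exact (Finset.erase_subset _ _).trans hT
    · exact Finset.insert_subset hiS hT
  have hsubiff : ∀ T, T ⊆ S → ∀ B ∈ 𝒮, (B ⊆ T ↔ B ⊆ g T) := by
    intro T hT B hB
    by_cases hiB : i ∈ B
    · constructor
      · intro h; exact absurd (subset_clo hB (h.trans hT) hiB) hic
      · intro h; exact absurd (subset_clo hB ((h.trans (hgsub T hT))) hiB) hic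
    · by_cases h : i ∈ T <;> simp only [hg, h, if_true, if_false]
      · rw [Finset.subset_erase]
        exact ⟨fun hh => ⟨hh, hiB⟩, fun hh => hh.1⟩
      · rw [Finset.subset_insert_iff, Finset.erase_eq_of_notMem hiB]
  have hFeq : ∀ T, T ⊆ S → f (chi (g T)) = f (chi T) := by
    intro T hT
    apply hbasis
    intro B hB
    rw [andB_chi, andB_chi, decide_eq_decide]
    exact (hsubiff T hT B hB).symm
  have hsign : ∀ T, T ⊆ S → (-1 : ℝ) ^ (S \ g T).card = -(-1 : ℝ) ^ (S \ T).card := by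
    intro T hT
    by_cases h : i ∈ T <;> simp only [hg, h, if_true, if_false]
    · have heq : S \ T.erase i = insert i (S \ T) := by
        ext j
        simp only [Finset.mem_sdiff, Finset.mem_erase, Finset.mem_insert]
        by_cases hji : j = i
        · subst hji; simp [hiS, h]
        · simp [hji]
      rw [heq, Finset.card_insert_of_notMem (by simp [h]), pow_succ]
      ring
    · have heq : S \ T = insert i (S \ insert i T) := by
        ext j
        simp only [Finset.mem_sdiff, Finset.mem_insert]
        by_cases hji : j = i
        · subst hji; simp [hiS, h]
        · simp [hji]
      rw [heq, Finset.card_insert_of_notMem (by simp), pow_succ]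
      ring
  apply Finset.sum_involution (fun T _ => g T)
  · intro T hT
    have hT' := Finset.mem_powerset.1 hT
    rw [hFeq T hT', hsign T hT']
    ring
  · intro T _ _
    by_cases h : i ∈ T <;> simp only [hg, h, if_true, if_false]
    · intro hc; exact (Finset.erase_eq_self.1 hc) h
    · intro hc; exact h (Finset.insert_eq_self.1 hc)
  · intro T hT
    exact Finset.mem_powerset.2 (hgsub T (Finset.mem_powerset.1 hT))
  · intro T _
    by_cases h : i ∈ T
    · simp only [hg, h, if_true]
      rw [if_neg (Finset.notMem_erase i T), Finset.insert_erase h]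
    · simp only [hg, h, if_false]
      rw [if_pos (Finset.mem_insert_self i T), Finset.erase_insert h]


/-- If `𝒮` is an NAADT basis for `f` with `|𝒮| = k`, then the Möbius sparsity of `f` is
at most `2^k` and the Möbius pattern complexity of `f` is at most `2^k`. -/
theorem stmt19 (n : ℕ) (f : (Fin n → Bool) → Bool) (c : Finset (Fin n) → ℝ)
    (Sf : Finset (Finset (Fin n))) (hmem : ∀ S, S ∈ Sf ↔ c S ≠ 0)
    (hf : ∀ x, (if f x then (1 : ℝ) else 0) = ∑ S : Finset (Fin n), c S * andR S x)
    (𝒮 : Finset (Finset (Fin n))) (k : ℕ) (hcard : 𝒮.card = k)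
    (hbasis : ∀ x y : Fin n → Bool, (∀ S ∈ 𝒮, andB S x = andB S y) → f x = f y) :
    Sf.card ≤ 2 ^ k ∧
    (Finset.univ.image
      (fun x : Fin n → Bool => fun S : {S // S ∈ Sf} => andB S.1 x)).card ≤ 2 ^ k := by
  classical
  -- every support set is closed
  have hclosed : ∀ S ∈ Sf, clo 𝒮 S = S := by
    intro S hS
    by_contra hne
    have hss : clo 𝒮 S ⊂ S := lt_of_le_of_ne (clo_subset 𝒮 S) hne
    obtain ⟨i, hiS, hic⟩ := Finset.exists_of_ssubset hss
    have h0 := vanish f 𝒮 hbasis S i hiS hic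
    rw [inversion f c hf S] at h0
    exact (hmem S).1 hS h0
  constructor
  · -- sparsity bound
    have hsub : Sf ⊆ (𝒮.powerset).image (fun A => A.sup id) := by
      intro S hS
      refine Finset.mem_image.2 ⟨𝒮.filter (fun B => B ⊆ S), ?_, hclosed S hS⟩
      exact Finset.mem_powerset.2 (Finset.filter_subset _ _)
    calc Sf.card ≤ ((𝒮.powerset).image (fun A => A.sup id)).card :=
          Finset.card_le_card hsub
      _ ≤ (𝒮.powerset).card := Finset.card_image_le
      _ = 2 ^ k := by rw [Finset.card_powerset, hcard]
  · -- pattern bound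
    set p : (Fin n → Bool) → ({B // B ∈ 𝒮} → Bool) := fun x B => andB B.1 x with hp
    set g : ({B // B ∈ 𝒮} → Bool) → ({S // S ∈ Sf} → Bool) :=
      fun v S => decide (∀ B : {B // B ∈ 𝒮}, B.1 ⊆ S.1 → v B = true) with hgd
    have hfactor : ∀ x : Fin n → Bool,
        (fun S : {S // S ∈ Sf} => andB S.1 x) = g (p x) := by
      intro x
      funext S
      simp only [hgd, hp, andB]
      rw [decide_eq_decide]
      constructor
      · intro h B hBS
        rw [decide_eq_true_iff]
        intro i hiB
        exact h i (hBS hiB)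
      · intro h i hiS
        have hiclo : i ∈ clo 𝒮 S.1 := by rw [hclosed S.1 S.2]; exact hiS
        obtain ⟨B, hB, hiB⟩ := Finset.mem_sup.1 hiclo
        have hBmem := Finset.mem_filter.1 hB
        have hx := h ⟨B, hBmem.1⟩ hBmem.2
        rw [decide_eq_true_iff] at hx
        exact hx i hiB
    have himg : (Finset.univ.image
        (fun x : Fin n → Bool => fun S : {S // S ∈ Sf} => andB S.1 x))
        = (Finset.univ.image p).image g := by
      rw [Finset.image_image]
      exact Finset.image_congr (fun x _ => hfactor x)
    rw [himg]
    calc ((Finset.univ.image p).image g).card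
        ≤ (Finset.univ.image p).card := Finset.card_image_le
      _ ≤ Fintype.card ({B // B ∈ 𝒮} → Bool) := Finset.card_le_univ _
      _ = 2 ^ k := by
          rw [Fintype.card_fun]
          simp [hcard]
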